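/- For h, σ ≥ 0, Owen's T function T(h,σ) equals the probability P[X ≥ h and 0 ≤ Y ≤ σX], where (X,Y) is a standard Gaussian vector in ℝ². -/

import Mathlib

open MeasureTheory Set Real

noncomputable def owenF (σ x : ℝ) : ℝ :=
  Real.exp (-x ^ 2 / 2) * ∫ t in (0:ℝ)..(σ * x), Real.exp (-t ^ 2 / 2)

lemma owen_int_Ioi (b : ℝ) (hb : 0 < b) :
    ∫ x in Ioi (0:ℝ), x * Real.exp (-b * x ^ 2) = (2 * b)⁻¹ := by
  have key : ∫ x in Ioi (0:ℝ), x * Real.exp (-b * x ^ 2) =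
      0 - (-(2 * b)⁻¹ * Real.exp (-b * 0 ^ 2)) := by
    apply integral_Ioi_of_hasDerivAt_of_tendsto'
      (f := fun x => -(2 * b)⁻¹ * Real.exp (-b * x ^ 2))
    · intro x _
      have : HasDerivAt (fun x : ℝ => -b * x ^ 2) (-b * (2 * x)) x := by
        simpa using ((hasDerivAt_pow 2 x).const_mul (-b))
      have := ((this.exp).const_mul (-(2 * b)⁻¹))
      convert this using 1
      · rfl
      field_simp
    · exact (integrable_mul_exp_neg_mul_sq hb).integrableOn
    · have : Filter.Tendsto (fun x : ℝ => Real.exp (-b * x ^ 2)) Filter.atTop (nhds 0) := by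
        apply Real.tendsto_exp_atBot.comp
        apply Filter.Tendsto.const_mul_atTop_of_neg (neg_neg_iff_pos.mpr hb)
        exact Filter.tendsto_pow_atTop (by norm_num)
      simpa using this.const_mul (-(2 * b)⁻¹)
  simp only [neg_mul] at key ⊢
  rw [key]
  simp [mul_inv, mul_comm]

lemma owen_integrableOn (σ : ℝ) (hσ : 0 ≤ σ) : IntegrableOn (owenF σ) (Ioi 0) := by
  have hdom : IntegrableOn (fun x : ℝ => σ * (x * Real.exp (-(2⁻¹ : ℝ) * x ^ 2))) (Ioi 0) :=
    ((integrable_mul_exp_neg_mul_sq (by norm_num)).integrableOn).const_mul σ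
  apply Integrable.mono' hdom
  · apply AEStronglyMeasurable.mul
    · exact (Real.continuous_exp.comp (by continuity)).aestronglyMeasurable
    · apply Continuous.aestronglyMeasurable
      have : Continuous fun x : ℝ => ∫ t in (0:ℝ)..(σ * x), Real.exp (-t ^ 2 / 2) := by
        have hint : Integrable fun t : ℝ => Real.exp (-t ^ 2 / 2) := by
          have := integrable_exp_neg_mul_sq (b := 2⁻¹) (by norm_num)
          simpa [neg_div, mul_comm, div_eq_inv_mul] using this
        exact (hint.continuous_primitive 0).comp (continuous_const.mul continuous_id)
      exact this
  · filter_upwards [ae_restrict_mem measurableSet_Ioi] with x hx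
    have hx0 : 0 < x := hx
    have h1 : ∫ t in (0:ℝ)..(σ * x), Real.exp (-t ^ 2 / 2) ≤ σ * x := by
      calc ∫ t in (0:ℝ)..(σ * x), Real.exp (-t ^ 2 / 2)
          ≤ ∫ t in (0:ℝ)..(σ * x), 1 := by
            apply intervalIntegral.integral_mono_on (by positivity)
            · exact Continuous.intervalIntegrable (by continuity) _ _
            · exact intervalIntegrable_const
            · intro t _
              calc Real.exp (-t ^ 2 / 2) ≤ Real.exp 0 := Real.exp_le_exp.mpr (by nlinarith [sq_nonneg t])
                _ = 1 := Real.exp_zero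
        _ = σ * x := by simp
    have h2 : 0 ≤ ∫ t in (0:ℝ)..(σ * x), Real.exp (-t ^ 2 / 2) :=
      intervalIntegral.integral_nonneg (by positivity) (fun t _ => (Real.exp_pos _).le)
    have h3 : 0 < Real.exp (-x ^ 2 / 2) := Real.exp_pos _
    simp only [owenF]
    rw [Real.norm_eq_abs, abs_of_nonneg (mul_nonneg h3.le h2)]
    calc Real.exp (-x ^ 2 / 2) * ∫ t in (0:ℝ)..(σ * x), Real.exp (-t ^ 2 / 2)
        ≤ Real.exp (-x ^ 2 / 2) * (σ * x) := by nlinarith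
      _ = σ * (x * Real.exp (-(2⁻¹ : ℝ) * x ^ 2)) := by ring_nf


lemma owen_arctan (σ : ℝ) (hσ : 0 ≤ σ) :
    ∫ x in Ioi (0:ℝ), owenF σ x = Real.arctan σ := by
  have step1 : ∀ x ∈ Ioi (0:ℝ), owenF σ x =
      ∫ u in Ioc (0:ℝ) σ, x * Real.exp (-((1 + u ^ 2) / 2) * x ^ 2) := by
    intro x hx
    have hx0 : 0 < x := hx
    have hsub := intervalIntegral.integral_comp_mul_left
      (f := fun t => Real.exp (-t ^ 2 / 2)) (a := (0:ℝ)) (b := σ) (c := x) hx0.ne'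
    have h1 : ∫ t in (0:ℝ)..(σ * x), Real.exp (-t ^ 2 / 2)
        = x * ∫ u in (0:ℝ)..σ, Real.exp (-(x * u) ^ 2 / 2) := by
      rw [hsub]
      rw [mul_zero, mul_comm x σ]
      rw [smul_eq_mul, ← mul_assoc, mul_inv_cancel₀ hx0.ne', one_mul]
    rw [owenF, h1, ← intervalIntegral.integral_of_le hσ, ← mul_assoc,
      ← intervalIntegral.integral_const_mul]
    apply intervalIntegral.integral_congr
    intro u _
    show Real.exp (-x ^ 2 / 2) * x * Real.exp (-(x * u) ^ 2 / 2) = _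
    rw [mul_comm (Real.exp (-x ^ 2 / 2)) x, mul_assoc, ← Real.exp_add]
    congr 1
    ring
  rw [setIntegral_congr_fun measurableSet_Ioi step1]
  have hswap : ∫ x in Ioi (0:ℝ), ∫ u in Ioc (0:ℝ) σ, x * Real.exp (-((1 + u ^ 2) / 2) * x ^ 2)
      = ∫ u in Ioc (0:ℝ) σ, ∫ x in Ioi (0:ℝ), x * Real.exp (-((1 + u ^ 2) / 2) * x ^ 2) := by
    apply integral_integral_swap
    rw [Measure.prod_restrict, ← Measure.volume_eq_prod]
    have hdom : IntegrableOn (fun p : ℝ × ℝ => p.1 * Real.exp (-(2⁻¹:ℝ) * p.1 ^ 2) * 1)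
        (Ioi (0:ℝ) ×ˢ Ioc (0:ℝ) σ) := by
      rw [IntegrableOn, Measure.volume_eq_prod, ← Measure.prod_restrict]
      exact Integrable.mul_prod ((integrable_mul_exp_neg_mul_sq (by norm_num)).restrict)
        (integrable_const 1)
    apply Integrable.mono' hdom
    · have hc : Continuous fun p : ℝ × ℝ => p.1 * Real.exp (-((1 + p.2 ^ 2) / 2) * p.1 ^ 2) := by
        continuity
      exact hc.aestronglyMeasurable
    · filter_upwards [ae_restrict_mem ((measurableSet_Ioi).prod measurableSet_Ioc)] with p hp
      obtain ⟨hp1, _⟩ := hp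
      have hp0 : 0 < p.1 := hp1
      simp only [Function.uncurry, Real.norm_eq_abs, mul_one]
      rw [abs_of_nonneg (by positivity)]
      have : Real.exp (-((1 + p.2 ^ 2) / 2) * p.1 ^ 2) ≤ Real.exp (-(2⁻¹:ℝ) * p.1 ^ 2) :=
        Real.exp_le_exp.mpr (by nlinarith [sq_nonneg p.2, sq_nonneg p.1])
      nlinarith [Real.exp_pos (-(2⁻¹:ℝ) * p.1 ^ 2)]
  rw [hswap]
  have step3 : ∀ u ∈ Ioc (0:ℝ) σ,
      (∫ x in Ioi (0:ℝ), x * Real.exp (-((1 + u ^ 2) / 2) * x ^ 2)) = (1 + u ^ 2)⁻¹ := by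
    intro u _
    rw [owen_int_Ioi _ (by positivity)]
    congr 1
    ring
  rw [setIntegral_congr_fun measurableSet_Ioc step3, ← intervalIntegral.integral_of_le hσ]
  have := integral_one_div_one_add_sq (a := (0:ℝ)) (b := σ)
  simp only [one_div] at this
  rw [this, Real.arctan_zero, sub_zero]


lemma owen_g_int : Integrable fun t : ℝ => Real.exp (-t ^ 2 / 2) := by
  have := integrable_exp_neg_mul_sq (b := (2:ℝ)⁻¹) (by norm_num)
  simpa [neg_div, mul_comm, div_eq_inv_mul] using this

lemma owenF_eq (σ x : ℝ) :
    (∫ y in (0:ℝ)..(σ * x), Real.exp (-(x ^ 2 + y ^ 2) / 2)) = owenF σ x := by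
  rw [owenF, ← intervalIntegral.integral_const_mul]
  apply intervalIntegral.integral_congr
  intro y _
  show Real.exp (-(x ^ 2 + y ^ 2) / 2) = Real.exp (-x ^ 2 / 2) * Real.exp (-y ^ 2 / 2)
  rw [← Real.exp_add]
  congr 1
  ring

theorem stmt7 (h σ : ℝ) (hh : 0 ≤ h) (hσ : 0 ≤ σ) :
    (1 / (2 * Real.pi)) *
        (Real.arctan σ - ∫ x in (0:ℝ)..h, ∫ y in (0:ℝ)..(σ * x), Real.exp (-(x ^ 2 + y ^ 2) / 2)) =
      ∫ p in {p : ℝ × ℝ | h ≤ p.1 ∧ 0 ≤ p.2 ∧ p.2 ≤ σ * p.1},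
        (1 / (2 * Real.pi)) * Real.exp (-(p.1 ^ 2 + p.2 ^ 2) / 2) := by
  set c : ℝ := 1 / (2 * Real.pi) with hc
  set f : ℝ × ℝ → ℝ := fun p => c * Real.exp (-(p.1 ^ 2 + p.2 ^ 2) / 2) with hfdef
  set S : Set (ℝ × ℝ) := {p : ℝ × ℝ | h ≤ p.1 ∧ 0 ≤ p.2 ∧ p.2 ≤ σ * p.1} with hSdef
  have hS : MeasurableSet S := by
    have : S = {p : ℝ × ℝ | h ≤ p.1} ∩ ({p : ℝ × ℝ | 0 ≤ p.2} ∩ {p : ℝ × ℝ | p.2 ≤ σ * p.1}) := by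
      ext p; simp [hSdef, and_assoc]
    rw [this]
    exact ((isClosed_le continuous_const continuous_fst).measurableSet).inter
      (((isClosed_le continuous_const continuous_snd).measurableSet).inter
        ((isClosed_le continuous_snd (continuous_const.mul continuous_fst)).measurableSet))
  have hfint : Integrable f := by
    have hprod : Integrable fun p : ℝ × ℝ => Real.exp (-p.1 ^ 2 / 2) * Real.exp (-p.2 ^ 2 / 2) := by
      rw [Measure.volume_eq_prod]
      exact Integrable.mul_prod owen_g_int owen_g_int
    apply (hprod.const_mul c).congr
    apply Filter.Eventually.of_forall
    intro p
    rw [hfdef]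
    show c * (Real.exp _ * Real.exp _) = c * Real.exp _
    rw [← Real.exp_add]
    congr 1
    ring
  -- RHS as iterated integral
  have hRHS : ∫ p in S, f p = c * ∫ x in Ioi h, owenF σ x := by
    rw [← integral_indicator hS]
    have hind : Integrable (S.indicator f) (volume.prod volume) := by
      rw [← Measure.volume_eq_prod]
      exact (integrable_indicator_iff hS).mpr hfint.integrableOn
    have := integral_prod (S.indicator f) hind
    rw [Measure.volume_eq_prod, this]
    have hinner : ∀ x : ℝ, (∫ y, S.indicator f (x, y)) =
        (Ici h).indicator (fun x => ∫ y in Icc (0:ℝ) (σ * x), f (x, y)) x := by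
      intro x
      by_cases hx : x ∈ Ici h
      · rw [Set.indicator_of_mem hx]
        have heq : (fun y => S.indicator f (x, y)) =
            (Icc (0:ℝ) (σ * x)).indicator (fun y => f (x, y)) := by
          funext y
          by_cases hy : y ∈ Icc (0:ℝ) (σ * x)
          · rw [Set.indicator_of_mem hy, Set.indicator_of_mem]
            exact ⟨hx, hy.1, hy.2⟩
          · rw [Set.indicator_of_notMem hy, Set.indicator_of_notMem]
            intro hmem
            exact hy ⟨hmem.2.1, hmem.2.2⟩
        rw [heq, integral_indicator measurableSet_Icc]
      · rw [Set.indicator_of_notMem hx]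
        have heq : (fun y => S.indicator f (x, y)) = fun _ => (0:ℝ) := by
          funext y
          apply Set.indicator_of_notMem
          intro hmem
          exact hx hmem.1
        rw [heq, integral_zero]
    simp only [hinner]
    rw [integral_indicator measurableSet_Ici, ← setIntegral_congr_set Ioi_ae_eq_Ici]
    rw [setIntegral_congr_fun measurableSet_Ioi (g := fun x => c * owenF σ x) ?_, integral_const_mul]
    intro x hx
    have hx0 : 0 ≤ σ * x := mul_nonneg hσ (le_trans hh (le_of_lt hx))
    show (∫ y in Icc (0:ℝ) (σ * x), f (x, y)) = c * owenF σ x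
    rw [integral_Icc_eq_integral_Ioc, ← intervalIntegral.integral_of_le hx0]
    rw [show (fun y => f (x, y)) = fun y => c * Real.exp (-(x ^ 2 + y ^ 2) / 2) from rfl]
    rw [intervalIntegral.integral_const_mul, owenF_eq]
  -- LHS
  have hsplit : Real.arctan σ = (∫ x in Ioc (0:ℝ) h, owenF σ x) + ∫ x in Ioi h, owenF σ x := by
    rw [← owen_arctan σ hσ, ← setIntegral_union (Set.Ioc_disjoint_Ioi le_rfl) measurableSet_Ioi
      ((owen_integrableOn σ hσ).mono_set Set.Ioc_subset_Ioi_self)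
      ((owen_integrableOn σ hσ).mono_set (Set.Ioi_subset_Ioi hh)),
      Set.Ioc_union_Ioi_eq_Ioi hh]
  have hLHS : (∫ x in (0:ℝ)..h, ∫ y in (0:ℝ)..(σ * x), Real.exp (-(x ^ 2 + y ^ 2) / 2))
      = ∫ x in Ioc (0:ℝ) h, owenF σ x := by
    rw [← intervalIntegral.integral_of_le hh]
    exact intervalIntegral.integral_congr fun x _ => owenF_eq σ x
  rw [hLHS, hsplit, hRHS]
  ring
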